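/- Let a, d_c, d_b, d, d_g, κ₀ be positive reals with a > d_c, set Θ = 4 d_g (d_c/(a−d_c))² d_b (d_b+d), assume κ₀² > Θ, and set w₋ = (κ₀ − √(κ₀² − Θ))/(2 d_g) and u₋ = (d_c/(a−d_c)) (d_b+d)/w₋. Write σ = (d_c/a)(a−d_c). If either σ ≤ d_g, or σ > d_g and, with β = σ/(σ − d_g), one has β/2 > 1 or κ₀² > β² Θ/(4(β−1)), then the trace of the Jacobian matrix of the kinetic system at (u₋, w₋) is negative: σ − d_g − (d_b/(d_b+d)) u₋² < 0. -/

import Mathlib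

private lemma stmt_12_aux (dg σ Θ κ₀ s : ℝ) (hdg : 0 < dg) (hκ : 0 < κ₀)
    (hΘpos : 0 < Θ) (hκΘ : Θ < κ₀ ^ 2) (hs0 : 0 ≤ s) (hs2 : s ^ 2 = κ₀ ^ 2 - Θ)
    (hcond : σ ≤ dg ∨ (dg < σ ∧ (σ < 2 * dg ∨ σ ^ 2 * Θ < 4 * dg * (σ - dg) * κ₀ ^ 2))) :
    (σ - dg) * Θ < dg * (κ₀ + s) ^ 2 := by
  have hκs : 0 < κ₀ + s := by linarith
  rcases hcond with hA | ⟨hB, hC⟩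
  · have h7 : (σ - dg) * Θ ≤ 0 :=
      mul_nonpos_of_nonpos_of_nonneg (by linarith) (le_of_lt hΘpos)
    nlinarith [mul_pos hdg (mul_pos hκs hκs)]
  · have hσdg : 0 < σ - dg := by linarith
    rcases hC with hσ2 | hC2'
    · nlinarith [mul_le_mul_of_nonneg_left (sq_nonneg s) (le_of_lt hdg),
        mul_nonneg (mul_nonneg (le_of_lt hdg) (le_of_lt hκ)) hs0]
    · have hd2 : 0 < Θ * (4 * dg * (σ - dg) * κ₀ ^ 2 - σ ^ 2 * Θ) :=
        mul_pos hΘpos (by linarith)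
      have h9 : (2 * dg * κ₀ * s) ^ 2 = 4 * dg ^ 2 * κ₀ ^ 2 * (κ₀ ^ 2 - Θ) := by
        rw [show (2 * dg * κ₀ * s) ^ 2 = 4 * dg ^ 2 * κ₀ ^ 2 * s ^ 2 from by ring, hs2]
      have hsq : (2 * dg * κ₀ * s) ^ 2 > (σ * Θ - 2 * dg * κ₀ ^ 2) ^ 2 := by
        rw [h9]; nlinarith [hd2]
      have hlin : 2 * dg * κ₀ * s > σ * Θ - 2 * dg * κ₀ ^ 2 := by
        nlinarith [hsq,
          mul_nonneg (mul_nonneg (mul_nonneg (by norm_num : (0:ℝ) ≤ 2) hdg.le) hκ.le) hs0]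
      nlinarith [hlin, hs2]

/-- Under the stated parameter conditions, the trace of the Jacobian of the kinetic
system at the steady state (u₋, w₋) is negative. -/
theorem stmt_12
    (a dc db d dg κ₀ : ℝ)
    (ha : 0 < a) (hdc : 0 < dc) (hdb : 0 < db) (hd : 0 < d) (hdg : 0 < dg)
    (hκ : 0 < κ₀) (hadc : dc < a)
    (Θ : ℝ) (hΘ : Θ = 4 * dg * (dc / (a - dc)) ^ 2 * db * (db + d))
    (hκΘ : κ₀ ^ 2 > Θ)
    (wm um : ℝ)
    (hwm : wm = (κ₀ - Real.sqrt (κ₀ ^ 2 - Θ)) / (2 * dg))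
    (hum : um = dc / (a - dc) * (db + d) / wm)
    (σ : ℝ) (hσ : σ = dc / a * (a - dc))
    (hcond : σ ≤ dg ∨
      (dg < σ ∧
        (σ / (σ - dg) / 2 > 1 ∨
          κ₀ ^ 2 > (σ / (σ - dg)) ^ 2 * Θ / (4 * (σ / (σ - dg) - 1))))) :
    σ - dg - db / (db + d) * um ^ 2 < 0 := by
  have hac : 0 < a - dc := by linarith
  have hΘpos : 0 < Θ := by rw [hΘ]; positivity
  set s := Real.sqrt (κ₀ ^ 2 - Θ) with hsdef
  have hs0 : 0 ≤ s := Real.sqrt_nonneg _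
  have hs2 : s ^ 2 = κ₀ ^ 2 - Θ := Real.sq_sqrt (by linarith)
  have hsκ : s < κ₀ := by nlinarith [hs2, hΘpos]
  have hwm0 : 0 < wm := by
    rw [hwm]; exact div_pos (by linarith) (by linarith)
  have hwmne : wm ≠ 0 := ne_of_gt hwm0
  have hκs : 0 < κ₀ + s := by linarith
  -- key identities
  have h1 : wm * (2 * dg) = κ₀ - s := by
    rw [hwm]; field_simp
  have h2 : (κ₀ - s) * (κ₀ + s) = Θ := by nlinarith [hs2]
  have h3 : wm * (2 * dg) * (κ₀ + s) = Θ := by rw [h1]; exact h2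
  have h4 : um * wm = dc / (a - dc) * (db + d) := by
    rw [hum]; field_simp
  have h5 : um * Θ = dc / (a - dc) * (db + d) * (2 * dg) * (κ₀ + s) := by
    calc um * Θ = um * wm * (2 * dg) * (κ₀ + s) := by rw [← h3]; ring
    _ = dc / (a - dc) * (db + d) * (2 * dg) * (κ₀ + s) := by rw [h4]
  have hdbd : (0:ℝ) < db + d := by linarith
  have h6 : db / (db + d) * um ^ 2 * Θ ^ 2 = dg * (κ₀ + s) ^ 2 * Θ := by
    calc db / (db + d) * um ^ 2 * Θ ^ 2 = db / (db + d) * (um * Θ) ^ 2 := by ring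
    _ = db / (db + d) * (dc / (a - dc) * (db + d) * (2 * dg) * (κ₀ + s)) ^ 2 := by rw [h5]
    _ = db * (dc / (a - dc)) ^ 2 * (db + d) * (4 * dg ^ 2) * (κ₀ + s) ^ 2 := by
        field_simp; ring
    _ = dg * (κ₀ + s) ^ 2 * Θ := by rw [hΘ]; ring
  -- convert the condition to polynomial form
  have hcond' : σ ≤ dg ∨ (dg < σ ∧ (σ < 2 * dg ∨ σ ^ 2 * Θ < 4 * dg * (σ - dg) * κ₀ ^ 2)) := by
    rcases hcond with hA | ⟨hB, hC⟩
    · exact Or.inl hA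
    · have hσdg : 0 < σ - dg := by linarith
      refine Or.inr ⟨hB, ?_⟩
      rcases hC with hC1 | hC2
      · left
        have h2σ : (2:ℝ) < σ / (σ - dg) := by linarith
        have := (lt_div_iff₀ hσdg).mp h2σ
        linarith
      · right
        have hβ : σ / (σ - dg) - 1 = dg / (σ - dg) := by
          field_simp; ring
        have heq : (σ / (σ - dg)) ^ 2 * Θ / (4 * (dg / (σ - dg)))
            = σ ^ 2 * Θ / (4 * dg * (σ - dg)) := by
          field_simp
        rw [hβ, heq] at hC2
        have := (div_lt_iff₀ (by positivity : (0:ℝ) < 4 * dg * (σ - dg))).mp hC2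
        linarith
  -- key inequality
  have hkey : (σ - dg) * Θ < dg * (κ₀ + s) ^ 2 :=
    stmt_12_aux dg σ Θ κ₀ s hdg hκ hΘpos hκΘ hs0 hs2 hcond'
  -- conclude
  have hq : (σ - dg) * Θ ^ 2 < db / (db + d) * um ^ 2 * Θ ^ 2 := by
    rw [h6]
    have := mul_lt_mul_of_pos_right hkey hΘpos
    have hr : (σ - dg) * Θ ^ 2 = (σ - dg) * Θ * Θ := by ring
    linarith [this]
  have hΘ2 : 0 < Θ ^ 2 := by positivity
  have := (mul_lt_mul_iff_left₀ hΘ2).mp hq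
  linarith
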